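/- arXiv:math/0611120 — 2 statements merged into one kernel-verified Lean document; each statement's English description precedes it below -/
import Mathlib

section
/- Let V be a vertex operator algebra and let W be a complex vector space equipped with a linear map Y_W(·,x) satisfying the truncation condition and the Jacobi identity for Y_W. For u ∈ V and w ∈ W, let l(u,w) be the smallest nonnegative integer such that weak associativity (x_0+x_2)^{l(u,w)} Y_W(u,x_0+x_2)Y_W(v,x_2)w = (x_0+x_2)^{l(u,w)} Y_W(Y(u,x_0)v,x_2)w holds for all v ∈ V. Then for all u, v ∈ V and w ∈ W: lim_{x_0 → −x_2+x_1} ( (x_0+x_2)^{l(u,w)} Y_W(Y(u,x_0)v,x_2)w ) = x_1^{l(u,w)} Y_W(v,x_2) Y_W(u,x_1) w, where the formal limit replaces each power of x_0 by the corresponding binomially expanded power of −x_2+x_1. -/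
noncomputable section

open scoped BigOperators

/-- Generalized binomial coefficient `z(z-1)⋯(z-k+1)/k!`. -/
def cbinom (z : ℂ) (k : ℕ) : ℂ :=
  (∏ j ∈ Finset.range k, (z - (j : ℂ))) / (k.factorial : ℂ)

/-- Generalized binomial coefficient with integer lower index (zero for negative index). -/
def cbinomZ (z : ℂ) (k : ℤ) : ℂ := if 0 ≤ k then cbinom z k.toNat else 0

section helperLemmas
open Finset

lemma cbinom_zero (z : ℂ) : cbinom z 0 = 1 := by simp [cbinom]

lemma cbinom_succ (z : ℂ) (m : ℕ) :
    ((m + 1 : ℕ) : ℂ) * cbinom z (m + 1) = z * cbinom (z - 1) m := by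
  unfold cbinom
  rw [Finset.prod_range_succ']
  have h1 : ∀ j ∈ Finset.range m, z - ((j + 1 : ℕ) : ℂ) = (z - 1) - (j : ℂ) := by
    intro j _; push_cast; ring
  rw [Finset.prod_congr rfl h1]
  have h2 : ((m + 1).factorial : ℂ) = ((m + 1 : ℕ) : ℂ) * (m.factorial : ℂ) := by
    rw [Nat.factorial_succ]; push_cast; ring
  have hm : (m.factorial : ℂ) ≠ 0 := Nat.cast_ne_zero.2 (Nat.factorial_ne_zero m)
  have hm1 : ((m + 1 : ℕ) : ℂ) ≠ 0 := Nat.cast_ne_zero.2 (Nat.succ_ne_zero m)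
  rw [h2, ← mul_div_assoc, mul_div_mul_left _ _ hm1]
  push_cast
  rw [sub_zero, mul_comm _ z, mul_div_assoc]

lemma cbinom_natCast (n k : ℕ) : cbinom (n : ℂ) k = (n.choose k : ℂ) := by
  induction k generalizing n with
  | zero => simp [cbinom_zero]
  | succ k ih =>
    cases n with
    | zero =>
      have h0 : cbinom ((0 : ℕ) : ℂ) (k + 1) = 0 := by
        unfold cbinom
        rw [Finset.prod_eq_zero (Finset.mem_range.2 (Nat.succ_pos k)) (by norm_num), zero_div]
      rw [h0]
      simp
    | succ m =>
      have h := cbinom_succ ((m + 1 : ℕ) : ℂ) k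
      have hcast : ((m + 1 : ℕ) : ℂ) - 1 = ((m : ℕ) : ℂ) := by push_cast; ring
      rw [hcast, ih] at h
      have h2 : ((k + 1 : ℕ) : ℂ) ≠ 0 := Nat.cast_ne_zero.2 (Nat.succ_ne_zero k)
      have h3 : ((k + 1 : ℕ) : ℂ) * (((m + 1).choose (k + 1) : ℕ) : ℂ)
          = ((m + 1 : ℕ) : ℂ) * ((m.choose k : ℕ) : ℂ) := by
        rw [← Nat.cast_mul, ← Nat.cast_mul, mul_comm (k+1) _, Nat.add_one_mul_choose_eq]
      apply mul_left_cancel₀ h2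
      rw [h, h3]

lemma cbinom_nat_eq_zero {n k : ℕ} (h : n < k) : cbinom (n : ℂ) k = 0 := by
  rw [cbinom_natCast, Nat.choose_eq_zero_of_lt h, Nat.cast_zero]

lemma cbinom_reflect (z : ℂ) (k : ℕ) :
    cbinom z k = (-1 : ℂ) ^ k * cbinom ((k : ℂ) - z - 1) k := by
  unfold cbinom
  rw [← mul_div_assoc]
  congr 1
  have hrefl := Finset.prod_range_reflect (fun j => z - (j : ℂ)) k
  rw [← hrefl]
  have hpc : (-1 : ℂ) ^ k = ∏ _j ∈ Finset.range k, (-1 : ℂ) := by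
    rw [Finset.prod_const, Finset.card_range]
  rw [hpc, ← Finset.prod_mul_distrib]
  apply Finset.prod_congr rfl
  intro j hj
  have hj' : j < k := Finset.mem_range.1 hj
  have hc : ((k - 1 - j : ℕ) : ℂ) = (k : ℂ) - 1 - (j : ℂ) := by
    have h1 : k - 1 - j = k - (1 + j) := by omega
    rw [h1, Nat.cast_sub (by omega)]
    push_cast; ring
  rw [hc]; ring

lemma cbinom_pred_self (n : ℕ) : cbinom ((n : ℂ) - 1) n = if n = 0 then 1 else 0 := by
  cases n with
  | zero => simp [cbinom_zero]
  | succ m =>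
    have h : ((m + 1 : ℕ) : ℂ) - 1 = ((m : ℕ) : ℂ) := by push_cast; ring
    rw [h, cbinom_nat_eq_zero (by omega)]
    simp

lemma cbinom_vandermonde (j : ℕ) (x y : ℂ) :
    ∑ m ∈ Finset.range (j + 1), cbinom x m * cbinom y (j - m) = cbinom (x + y) j := by
  induction j generalizing x y with
  | zero => simp [cbinom_zero]
  | succ j ih =>
    have hne : ((j + 1 : ℕ) : ℂ) ≠ 0 := Nat.cast_ne_zero.2 (Nat.succ_ne_zero j)
    apply mul_left_cancel₀ hne
    have hrhs : ((j + 1 : ℕ) : ℂ) * cbinom (x + y) (j + 1) = (x + y) * cbinom (x + y - 1) j :=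
      cbinom_succ _ j
    rw [hrhs, Finset.mul_sum]
    have hsplit : ∀ m ∈ Finset.range (j + 2),
        ((j + 1 : ℕ) : ℂ) * (cbinom x m * cbinom y (j + 1 - m))
          = (m : ℂ) * cbinom x m * cbinom y (j + 1 - m)
            + ((j + 1 - m : ℕ) : ℂ) * cbinom y (j + 1 - m) * cbinom x m := by
      intro m hm
      have hm' : m ≤ j + 1 := by have := Finset.mem_range.1 hm; omega
      have hc : ((j + 1 - m : ℕ) : ℂ) = ((j + 1 : ℕ) : ℂ) - (m : ℂ) := by
        rw [Nat.cast_sub hm']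
      rw [hc]; push_cast; ring
    rw [show j + 1 + 1 = j + 2 from rfl, Finset.sum_congr rfl hsplit, Finset.sum_add_distrib]
    have h1 : ∑ m ∈ Finset.range (j + 2), (m : ℂ) * cbinom x m * cbinom y (j + 1 - m)
        = x * cbinom (x - 1 + y) j := by
      rw [Finset.sum_range_succ']
      have hterm : ∀ m ∈ Finset.range (j + 1),
          ((m + 1 : ℕ) : ℂ) * cbinom x (m + 1) * cbinom y (j + 1 - (m + 1))
            = x * (cbinom (x - 1) m * cbinom y (j - m)) := by
        intro m _
        have h4 : j + 1 - (m + 1) = j - m := by omega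
        rw [h4, cbinom_succ x m]; ring
      rw [Finset.sum_congr rfl hterm, ← Finset.mul_sum, ih]
      simp
    have h2 : ∑ m ∈ Finset.range (j + 2), ((j + 1 - m : ℕ) : ℂ) * cbinom y (j + 1 - m) * cbinom x m
        = y * cbinom (x + (y - 1)) j := by
      rw [show j + 2 = (j + 1) + 1 from rfl, Finset.sum_range_succ]
      have hterm : ∀ m ∈ Finset.range (j + 1),
          ((j + 1 - m : ℕ) : ℂ) * cbinom y (j + 1 - m) * cbinom x m
            = y * (cbinom x m * cbinom (y - 1) (j - m)) := by
        intro m hm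
        have hm' : m ≤ j := by have := Finset.mem_range.1 hm; omega
        have h4 : j + 1 - m = (j - m) + 1 := by omega
        rw [h4, cbinom_succ y (j - m)]; ring
      rw [Finset.sum_congr rfl hterm, ← Finset.mul_sum, ih]
      simp
    rw [h1, h2, show x - 1 + y = x + y - 1 from by ring, show x + (y - 1) = x + y - 1 from by ring]
    ring

lemma sum_Icc_eq_range {γ : Type*} [AddCommMonoid γ] (a b : ℤ) (f : ℤ → γ) :
    ∑ A ∈ Finset.Icc a b, f A = ∑ k ∈ Finset.range ((b + 1 - a).toNat), f (a + k) := by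
  have hset : Finset.Icc a b
      = (Finset.range ((b + 1 - a).toNat)).map ⟨fun k : ℕ => a + (k : ℤ), fun x y h => by simp only [] at h; omega⟩ := by
    ext x
    simp only [Finset.mem_Icc, Finset.mem_map, Finset.mem_range, Function.Embedding.coeFn_mk]
    constructor
    · intro hx; exact ⟨(x - a).toNat, by omega, by change a + (((x - a).toNat : ℕ) : ℤ) = x; omega⟩
    · rintro ⟨k, hk, rfl⟩; change a ≤ a + (k:ℤ) ∧ a + (k:ℤ) ≤ b; omega
  rw [hset, Finset.sum_map]
  rfl

lemma sum_range_eq_Icc_desc {γ : Type*} [AddCommMonoid γ] (c : ℤ) (n : ℕ) (f : ℤ → γ) :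
    ∑ i ∈ Finset.range (n + 1), f (c - i) = ∑ j ∈ Finset.Icc (c - n) c, f j := by
  rw [sum_Icc_eq_range]
  have hn : (c + 1 - (c - n)).toNat = n + 1 := by omega
  rw [hn, ← Finset.sum_range_reflect (fun k => f (c - n + k)) (n + 1)]
  apply Finset.sum_congr rfl
  intro i hi
  have hi' : i < n + 1 := Finset.mem_range.1 hi
  congr 1
  omega

lemma delta_lemma (P s : ℤ) (hs : P ≤ s) :
    ∑ A ∈ Finset.Icc P s, ((-1 : ℂ) ^ (A - P) * cbinom (A : ℂ) ((A - P).toNat))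
        * cbinom (s : ℂ) ((s - A).toNat)
      = if s = P then 1 else 0 := by
  set n : ℕ := (s - P).toNat with hn
  rw [sum_Icc_eq_range]
  have hcard : (s + 1 - P).toNat = n + 1 := by omega
  rw [hcard]
  have h4 : -(P:ℂ) - 1 + (s : ℂ) = ((n:ℕ):ℂ) - 1 := by
    have h5 : ((n : ℕ) : ℤ) = s - P := by omega
    have h6 : ((n : ℕ) : ℂ) = (s : ℂ) - (P : ℂ) := by
      rw [← Int.cast_natCast, h5]; push_cast; ring
    rw [h6]; ring
  have hmid : ∑ k ∈ Finset.range (n + 1), cbinom (-(P:ℂ) - 1) k * cbinom (s : ℂ) (n - k)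
      = if s = P then 1 else 0 := by
    rw [cbinom_vandermonde, h4, cbinom_pred_self]
    by_cases h : s = P
    · have h0 : n = 0 := by omega
      simp [h, h0]
    · have h0 : n ≠ 0 := by omega
      simp [h, h0]
  rw [← hmid]
  apply Finset.sum_congr rfl
  intro k hk
  have hk2 : k ≤ n := by have := Finset.mem_range.1 hk; omega
  rw [show P + (k:ℤ) - P = (k:ℤ) from by ring,
      show ((k:ℤ)).toNat = k from by omega,
      show (s - (P + (k:ℤ))).toNat = n - k from by omega,
      zpow_natCast,
      show (Int.cast (P + (k:ℤ)) : ℂ) = (k:ℂ) - (-(P:ℂ) - 1) - 1 from by push_cast; ring,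
      ← cbinom_reflect]

lemma cbinom_vdm' (a b J : ℕ) (hJ : J ≤ b) :
    ∑ k ∈ Finset.range (a + 1), cbinom (b : ℂ) ((b - J) + k) * cbinom (a : ℂ) k
      = cbinom ((b : ℂ) + a) J := by
  have hV := cbinom_vandermonde J (a : ℂ) (b : ℂ)
  have h1 : ∀ m ∈ Finset.range (J + 1),
      cbinom (a:ℂ) m * cbinom (b:ℂ) (J - m) = cbinom (b:ℂ) ((b - J) + m) * cbinom (a:ℂ) m := by
    intro m hm
    have hm' : m ≤ J := by have := Finset.mem_range.1 hm; omega
    have h2 : J - m ≤ b := by omega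
    have h3 : b - (J - m) = (b - J) + m := by omega
    rw [cbinom_natCast b (J - m), cbinom_natCast b ((b-J)+m), ← Nat.choose_symm h2, h3]
    ring
  rw [Finset.sum_congr rfl h1] at hV
  have hA : ∑ k ∈ Finset.range (a + 1), cbinom (b : ℂ) ((b - J) + k) * cbinom (a : ℂ) k
      = ∑ k ∈ Finset.range (a + J + 1), cbinom (b : ℂ) ((b - J) + k) * cbinom (a : ℂ) k := by
    apply Finset.sum_subset
    · apply Finset.range_subset_range.2; omega
    · intro k hk1 hk2
      have : a < k := by simp only [Finset.mem_range] at hk1 hk2; omega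
      rw [cbinom_nat_eq_zero this, mul_zero]
  have hB : ∑ k ∈ Finset.range (J + 1), cbinom (b : ℂ) ((b - J) + k) * cbinom (a : ℂ) k
      = ∑ k ∈ Finset.range (a + J + 1), cbinom (b : ℂ) ((b - J) + k) * cbinom (a : ℂ) k := by
    apply Finset.sum_subset
    · apply Finset.range_subset_range.2; omega
    · intro k hk1 hk2
      have hk3 : J < k := by simp only [Finset.mem_range] at hk1 hk2; omega
      have : b < (b - J) + k := by omega
      rw [cbinom_nat_eq_zero this, zero_mul]
  rw [hA, ← hB, hV, add_comm ((a:ℕ):ℂ)]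

lemma neg_one_zpow_ite (n : ℤ) : (-1 : ℂ) ^ n = if Even n then 1 else -1 := by
  rcases Int.even_or_odd n with h | h
  · rw [if_pos h, h.neg_one_zpow]
  · rw [if_neg (by simpa using h), h.neg_one_zpow]

lemma neg_one_pow_ite (n : ℕ) : (-1 : ℂ) ^ n = if Even n then 1 else -1 := by
  rcases Nat.even_or_odd n with h | h
  · rw [if_pos h, h.neg_one_pow]
  · rw [if_neg (by simpa using h), h.neg_one_pow]

lemma scalarB_core (l p J : ℕ) :
    ∑ k ∈ Finset.range (J + 1), -(cbinom (-(p:ℂ) - 1) (J - k) * cbinom ((l:ℕ) : ℂ) k)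
      = -cbinom ((l : ℂ) - (p : ℂ) - 1) J := by
  rw [Finset.sum_neg_distrib]
  congr 1
  have h1 : ∀ k ∈ Finset.range (J + 1),
      cbinom (-(p:ℂ) - 1) (J - k) * cbinom ((l:ℕ) : ℂ) k
        = cbinom ((l:ℕ) : ℂ) k * cbinom (-(p:ℂ) - 1) (J - k) := fun k _ => mul_comm _ _
  rw [Finset.sum_congr rfl h1, cbinom_vandermonde J ((l:ℕ) : ℂ) (-(p:ℂ) - 1)]
  congr 1
  ring

lemma scalarB (l p : ℕ) (j : ℤ) (hj : 0 ≤ j) :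
    ∑ A ∈ Finset.Icc (-1 - j) (min (-1) ((l:ℤ) - 1 - j)),
        ((-1 : ℂ) ^ (A - (p:ℤ)) * cbinom (A : ℂ) p) * cbinom ((l:ℕ) : ℂ) (((l:ℤ) - 1 - A - j).toNat)
      = -cbinom ((l : ℂ) - (p : ℂ) - 1) j.toNat := by
  set J : ℕ := j.toNat with hJdef
  have hJj : (J:ℤ) = j := by omega
  have hterm : ∀ k : ℕ, k ≤ J → k ≤ l →
      ((-1 : ℂ) ^ ((-1 - j + (k:ℤ)) - (p:ℤ)) * cbinom ((-1 - j + (k:ℤ) : ℤ) : ℂ) p)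
          * cbinom ((l:ℕ) : ℂ) (((l:ℤ) - 1 - (-1 - j + (k:ℤ)) - j).toNat)
        = -(cbinom (-(p:ℂ) - 1) (J - k) * cbinom ((l:ℕ) : ℂ) k) := by
    intro k hkJ hkl
    have h2 : ((l:ℤ) - 1 - (-1 - j + (k:ℤ)) - j).toNat = l - k := by omega
    rw [h2, cbinom_natCast l (l - k), Nat.choose_symm hkl, ← cbinom_natCast l k]
    rw [cbinom_reflect ((-1 - j + (k:ℤ) : ℤ) : ℂ) p]
    rw [show (p:ℂ) - ((-1 - j + (k:ℤ) : ℤ) : ℂ) - 1 = ((p + (J - k) : ℕ) : ℂ) by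
      push_cast [Nat.cast_sub hkJ]
      rw [show ((j:ℤ) : ℂ) = ((J:ℕ) : ℂ) by rw [← hJj]; push_cast; ring]
      ring]
    rw [cbinom_natCast (p + (J - k)) p]
    rw [show (p + (J - k)).choose p = (p + (J - k)).choose (J - k) by
      have h := Nat.choose_symm (Nat.le_add_left (J - k) p)
      rwa [Nat.add_sub_cancel] at h]
    rw [cbinom_reflect (-(p:ℂ) - 1) (J - k)]
    rw [show ((J - k : ℕ) : ℂ) - (-(p:ℂ) - 1) - 1 = ((p + (J - k) : ℕ) : ℂ) by push_cast; ring]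
    rw [cbinom_natCast (p + (J - k)) (J - k)]
    have hsig : (-1 : ℂ) ^ ((-1 - j + (k:ℤ)) - (p:ℤ)) * (-1:ℂ) ^ p = -(-1:ℂ) ^ (J - k) := by
      have he : (-1 - j + (k:ℤ)) - (p:ℤ) = -(((J - k) + 1 + p : ℕ) : ℤ) := by
        push_cast [Nat.cast_sub hkJ]
        omega
      rw [he, zpow_neg, zpow_natCast]
      have hx : ((-1:ℂ) ^ ((J - k) + 1 + p))⁻¹ = (-1:ℂ) ^ ((J - k) + 1 + p) := by
        rcases Nat.even_or_odd ((J - k) + 1 + p) with h | h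
        · rw [h.neg_one_pow]; norm_num
        · rw [h.neg_one_pow]; norm_num
      rw [hx, pow_add, pow_add]
      have hp2 : (-1:ℂ) ^ p * (-1:ℂ) ^ p = 1 := by
        rw [← pow_add]; exact Even.neg_one_pow ⟨p, rfl⟩
      linear_combination (-(-1:ℂ) ^ (J - k)) * hp2
    linear_combination (((p + (J - k)).choose (J - k) : ℂ) * cbinom ((l:ℕ) : ℂ) k) * hsig
  by_cases hc : j ≤ (l:ℤ)
  · have hmin : min (-1 : ℤ) ((l:ℤ) - 1 - j) = -1 := by omega
    rw [hmin, sum_Icc_eq_range]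
    have hcard : ((-1 : ℤ) + 1 - (-1 - j)).toNat = J + 1 := by omega
    rw [hcard, ← scalarB_core l p J]
    apply Finset.sum_congr rfl
    intro k hk
    have hk' := Finset.mem_range.1 hk
    exact hterm k (by omega) (by omega)
  · have hmin : min (-1 : ℤ) ((l:ℤ) - 1 - j) = (l:ℤ) - 1 - j := by omega
    rw [hmin, sum_Icc_eq_range]
    have hcard : ((l:ℤ) - 1 - j + 1 - (-1 - j)).toNat = l + 1 := by omega
    rw [hcard]
    have hext : ∑ k ∈ Finset.range (l + 1), -(cbinom (-(p:ℂ) - 1) (J - k) * cbinom ((l:ℕ) : ℂ) k)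
        = ∑ k ∈ Finset.range (J + 1), -(cbinom (-(p:ℂ) - 1) (J - k) * cbinom ((l:ℕ) : ℂ) k) := by
      apply Finset.sum_subset
      · apply Finset.range_subset_range.2; omega
      · intro k hk1 hk2
        have : l < k := by simp only [Finset.mem_range] at hk1 hk2; omega
        rw [cbinom_nat_eq_zero this, mul_zero, neg_zero]
    rw [← scalarB_core l p J, ← hext]
    apply Finset.sum_congr rfl
    intro k hk
    have hk' := Finset.mem_range.1 hk
    exact hterm k (by omega) (by omega)

lemma cbinom_vdm_any (a b J N : ℕ) (hJ : J ≤ b) (hN : a ≤ N ∨ J ≤ N) :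
    ∑ k ∈ Finset.range (N + 1), cbinom (b : ℂ) ((b - J) + k) * cbinom (a : ℂ) k
      = cbinom ((b : ℂ) + a) J := by
  rw [← cbinom_vdm' a b J hJ]
  have hbig1 : ∑ k ∈ Finset.range (N + 1), cbinom (b : ℂ) ((b - J) + k) * cbinom (a : ℂ) k
      = ∑ k ∈ Finset.range (N + a + 1), cbinom (b : ℂ) ((b - J) + k) * cbinom (a : ℂ) k := by
    apply Finset.sum_subset
    · apply Finset.range_subset_range.2; omega
    · intro k hk1 hk2
      have hk3 : N < k := by simp only [Finset.mem_range] at hk1 hk2; omega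
      rcases hN with h | h
      · rw [cbinom_nat_eq_zero (show a < k by omega), mul_zero]
      · rw [cbinom_nat_eq_zero (show b < (b - J) + k by omega), zero_mul]
  have hbig2 : ∑ k ∈ Finset.range (a + 1), cbinom (b : ℂ) ((b - J) + k) * cbinom (a : ℂ) k
      = ∑ k ∈ Finset.range (N + a + 1), cbinom (b : ℂ) ((b - J) + k) * cbinom (a : ℂ) k := by
    apply Finset.sum_subset
    · apply Finset.range_subset_range.2; omega
    · intro k hk1 hk2
      have hk3 : a < k := by simp only [Finset.mem_range] at hk1 hk2; omega
      rw [cbinom_nat_eq_zero hk3, mul_zero]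
  rw [hbig1, ← hbig2]

lemma scalarA (l : ℕ) (P : ℤ) (hP : P ≤ -1) (j : ℤ) (hj : 0 ≤ j) :
    ∑ A ∈ Finset.Icc (max P (-1 - j)) ((l:ℤ) - 1 - j),
        ((-1 : ℂ) ^ (A - P) * cbinom (A : ℂ) ((A - P).toNat))
          * cbinom ((l:ℕ) : ℂ) (((l:ℤ) - 1 - A - j).toNat)
      = cbinom ((l : ℂ) - (P : ℂ) - 1) j.toNat := by
  set J : ℕ := j.toNat with hJdef
  set t : ℕ := (-P - 1).toNat with htdef
  have hJj : (J:ℤ) = j := by omega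
  have htP : (t:ℤ) = -P - 1 := by omega
  have htC : ((t:ℕ) : ℂ) = -(P:ℂ) - 1 := by
    calc ((t:ℕ):ℂ) = (((t:ℕ):ℤ) : ℂ) := by push_cast; rfl
    _ = ((-P - 1 : ℤ) : ℂ) := by rw [htP]
    _ = -(P:ℂ) - 1 := by push_cast; ring
  have hjC : ((j : ℤ) : ℂ) = ((J:ℕ) : ℂ) := by rw [← hJj]; push_cast; rfl
  have htarget : (l : ℂ) - (P : ℂ) - 1 = ((t:ℕ):ℂ) + ((l:ℕ):ℂ) := by rw [htC]; push_cast; ring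
  rw [htarget]
  by_cases hc : P ≤ -1 - j
  · have hJt : J ≤ t := by omega
    have hmax : max P (-1 - j) = -1 - j := by omega
    rw [hmax, sum_Icc_eq_range,
      show ((l:ℤ) - 1 - j + 1 - (-1 - j)).toNat = l + 1 by omega,
      ← cbinom_vdm_any l t J l (by omega) (Or.inl le_rfl)]
    apply Finset.sum_congr rfl
    intro k hk
    have hkl : k ≤ l := by have := Finset.mem_range.1 hk; omega
    rw [show ((l:ℤ) - 1 - (-1 - j + (k:ℤ)) - j).toNat = l - k by omega,
      cbinom_natCast l (l - k), Nat.choose_symm hkl, ← cbinom_natCast l k,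
      show ((-1 - j + (k:ℤ)) - P).toNat = (t - J) + k by omega,
      show (-1 - j + (k:ℤ)) - P = (((t - J) + k : ℕ) : ℤ) by push_cast [Nat.cast_sub hJt]; omega,
      zpow_natCast,
      cbinom_reflect ((-1 - j + (k:ℤ) : ℤ) : ℂ) ((t - J) + k),
      show (((t - J) + k : ℕ) : ℂ) - ((-1 - j + (k:ℤ) : ℤ) : ℂ) - 1 = ((t:ℕ) : ℂ) by
        push_cast [Nat.cast_sub hJt]
        rw [hjC]
        ring]
    have hm2 : (-1:ℂ) ^ ((t - J) + k) * (-1:ℂ) ^ ((t - J) + k) = 1 := by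
      rw [← pow_add]; exact Even.neg_one_pow ⟨(t - J) + k, rfl⟩
    linear_combination (cbinom ((t:ℕ) : ℂ) ((t - J) + k) * cbinom ((l:ℕ) : ℂ) k) * hm2
  · have htJ : t < J := by omega
    have hmax : max P (-1 - j) = P := by omega
    rw [hmax, sum_Icc_eq_range]
    by_cases hJlt : J ≤ l + t
    · have hcs : cbinom (((l:ℕ):ℂ) + ((t:ℕ):ℂ)) ((l + t) - J)
          = cbinom (((t:ℕ):ℂ) + ((l:ℕ):ℂ)) J := by
        rw [show ((l:ℕ):ℂ) + ((t:ℕ):ℂ) = (((l + t : ℕ)):ℂ) by push_cast; ring,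
          show ((t:ℕ):ℂ) + ((l:ℕ):ℂ) = (((l + t : ℕ)):ℂ) by push_cast; ring,
          cbinom_natCast, cbinom_natCast, Nat.choose_symm hJlt]
      rw [← hcs, ← cbinom_vdm_any t l ((l + t) - J) ((l + t) - J) (by omega) (Or.inr le_rfl),
        show ((l:ℤ) - 1 - j + 1 - P).toNat = ((l + t) - J) + 1 by omega]
      apply Finset.sum_congr rfl
      intro m hm
      have hm' : m ≤ (l + t) - J := by have := Finset.mem_range.1 hm; omega
      rw [show ((l:ℤ) - 1 - (P + (m:ℤ)) - j).toNat = ((l + t) - J) - m by omega,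
        cbinom_natCast l (((l + t) - J) - m),
        show ((l + t) - J) - m = l - ((l - ((l + t) - J)) + m) by omega,
        Nat.choose_symm (by omega), ← cbinom_natCast l ((l - ((l + t) - J)) + m),
        show P + (m:ℤ) - P = ((m:ℕ):ℤ) by push_cast; ring,
        zpow_natCast,
        show (((m:ℕ):ℤ)).toNat = m by omega,
        cbinom_reflect ((P + (m:ℤ) : ℤ) : ℂ) m,
        show ((m:ℕ):ℂ) - ((P + (m:ℤ) : ℤ) : ℂ) - 1 = ((t:ℕ):ℂ) by
          push_cast
          rw [htC]
          ring]
      have hm2 : (-1:ℂ) ^ m * (-1:ℂ) ^ m = 1 := by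
        rw [← pow_add]; exact Even.neg_one_pow ⟨m, rfl⟩
      linear_combination (cbinom ((t:ℕ) : ℂ) m * cbinom ((l:ℕ) : ℂ) ((l - ((l + t) - J)) + m)) * hm2
    · rw [show ((l:ℤ) - 1 - j + 1 - P).toNat = 0 by omega]
      simp only [Finset.range_zero, Finset.sum_empty]
      rw [show ((t:ℕ):ℂ) + ((l:ℕ):ℂ) = (((t + l : ℕ)):ℂ) by push_cast; ring, cbinom_natCast,
        Nat.choose_eq_zero_of_lt (by omega), Nat.cast_zero]

variable {W : Type} [AddCommGroup W] [Module ℂ W]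

lemma fibLemma (Gg : ℤ → W) (l : ℕ) (am ap : ℤ) (cf : ℤ → ℂ) (bm bp : ℤ)
    (hbm : bm = (l:ℤ) - 1 - ap - l) (hbp : bp = (l:ℤ) - 1 - am) :
    ∑ A ∈ Finset.Icc am ap, cf A • (∑ i ∈ Finset.range (l + 1),
        cbinom ((l:ℕ) : ℂ) i • Gg ((l:ℤ) - 1 - A - i))
      = ∑ j ∈ Finset.Icc bm bp,
          (∑ A ∈ Finset.Icc (max am ((l:ℤ) - 1 - j - l)) (min ap ((l:ℤ) - 1 - j)),
            cf A * cbinom ((l:ℕ) : ℂ) (((l:ℤ) - 1 - A - j).toNat)) • Gg j := by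
  subst hbm hbp
  have h1 : ∀ A ∈ Finset.Icc am ap,
      cf A • (∑ i ∈ Finset.range (l + 1), cbinom ((l:ℕ):ℂ) i • Gg ((l:ℤ) - 1 - A - i))
        = ∑ j ∈ Finset.Icc ((l:ℤ) - 1 - A - l) ((l:ℤ) - 1 - A),
            (cf A * cbinom ((l:ℕ):ℂ) (((l:ℤ) - 1 - A - j).toNat)) • Gg j := by
    intro A _
    rw [Finset.smul_sum]
    have h2 : ∀ i ∈ Finset.range (l + 1),
        cf A • cbinom ((l:ℕ):ℂ) i • Gg ((l:ℤ) - 1 - A - i)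
          = (fun j : ℤ => (cf A * cbinom ((l:ℕ):ℂ) (((l:ℤ) - 1 - A - j).toNat)) • Gg j)
              (((l:ℤ) - 1 - A) - i) := by
      intro i hi
      simp only []
      rw [show (l:ℤ) - 1 - A - ((l:ℤ) - 1 - A - (i:ℤ)) = (i:ℤ) by ring,
        show ((i:ℤ)).toNat = i by omega, smul_smul]
    rw [Finset.sum_congr rfl h2]
    exact sum_range_eq_Icc_desc ((l:ℤ) - 1 - A) l
      (fun j : ℤ => (cf A * cbinom ((l:ℕ):ℂ) (((l:ℤ) - 1 - A - j).toNat)) • Gg j)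
  rw [Finset.sum_congr rfl h1,
    Finset.sum_comm' (s := Finset.Icc am ap)
      (t := fun A => Finset.Icc ((l:ℤ) - 1 - A - l) ((l:ℤ) - 1 - A))
      (t' := Finset.Icc ((l:ℤ) - 1 - ap - l) ((l:ℤ) - 1 - am))
      (s' := fun j => Finset.Icc (max am ((l:ℤ) - 1 - j - l)) (min ap ((l:ℤ) - 1 - j)))
      (by intro A j; simp only [Finset.mem_Icc, max_le_iff, le_min_iff]; omega)]
  apply Finset.sum_congr rfl
  intro j _
  rw [Finset.sum_smul]

lemma invLemma (Ee Gg : ℤ → W) (l : ℕ) (A₁ P : ℤ)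
    (hA₁P : P + 1 ≤ A₁)
    (hE : ∀ s : ℤ, A₁ ≤ s → Ee s = 0)
    (hWA : ∀ A : ℤ, (∑ᶠ i : ℕ, cbinom ((A:ℂ) + (i:ℂ)) i • Ee (A + (i:ℤ)))
        = ∑ i ∈ Finset.range (l + 1), cbinom ((l:ℕ):ℂ) i • Gg ((l:ℤ) - 1 - A - i)) :
    ∑ A ∈ Finset.Icc P A₁, ((-1 : ℂ) ^ (A - P) * cbinom (A : ℂ) ((A - P).toNat))
        • (∑ i ∈ Finset.range (l + 1), cbinom ((l:ℕ):ℂ) i • Gg ((l:ℤ) - 1 - A - i))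
      = Ee P := by
  have hLfin : ∀ A : ℤ, A ≤ A₁ →
      (∑ i ∈ Finset.range (l + 1), cbinom ((l:ℕ):ℂ) i • Gg ((l:ℤ) - 1 - A - i))
        = ∑ s ∈ Finset.Icc A (A₁ - 1), cbinom (s : ℂ) ((s - A).toNat) • Ee s := by
    intro A hA
    rw [← hWA A]
    rw [finsum_eq_finset_sum_of_support_subset _
      (s := Finset.range ((A₁ - A).toNat)) ?_]
    · rw [sum_Icc_eq_range A (A₁ - 1), show (A₁ - 1 + 1 - A).toNat = (A₁ - A).toNat by omega]
      apply Finset.sum_congr rfl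
      intro k _
      rw [show (A + (k:ℤ) - A).toNat = k by omega,
        show ((A + (k:ℤ) : ℤ) : ℂ) = (A:ℂ) + ((k:ℕ):ℂ) by push_cast; ring]
    · intro i hi
      rw [Finset.coe_range, Set.mem_Iio]
      by_contra hcon
      apply hi
      show cbinom ((A:ℂ) + (i:ℂ)) i • Ee (A + (i:ℤ)) = 0
      rw [hE (A + (i:ℤ)) (by omega), smul_zero]
  have hstep : ∀ A ∈ Finset.Icc P A₁,
      ((-1 : ℂ) ^ (A - P) * cbinom (A : ℂ) ((A - P).toNat))
          • (∑ i ∈ Finset.range (l + 1), cbinom ((l:ℕ):ℂ) i • Gg ((l:ℤ) - 1 - A - i))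
        = ∑ s ∈ Finset.Icc A (A₁ - 1),
            (((-1 : ℂ) ^ (A - P) * cbinom (A : ℂ) ((A - P).toNat))
              * cbinom (s : ℂ) ((s - A).toNat)) • Ee s := by
    intro A hA
    rw [hLfin A (Finset.mem_Icc.1 hA).2, Finset.smul_sum]
    apply Finset.sum_congr rfl
    intro s _
    rw [smul_smul]
  rw [Finset.sum_congr rfl hstep,
    Finset.sum_comm' (s := Finset.Icc P A₁)
      (t := fun A => Finset.Icc A (A₁ - 1))
      (t' := Finset.Icc P (A₁ - 1))
      (s' := fun s => Finset.Icc P s)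
      (by intro A s; simp only [Finset.mem_Icc]; omega)]
  have hj2 : ∀ s ∈ Finset.Icc P (A₁ - 1),
      (∑ A ∈ Finset.Icc P s,
          (((-1 : ℂ) ^ (A - P) * cbinom (A : ℂ) ((A - P).toNat))
            * cbinom (s : ℂ) ((s - A).toNat)) • Ee s)
        = (if s = P then (1:ℂ) else 0) • Ee s := by
    intro s hs
    rw [← Finset.sum_smul, delta_lemma P s (Finset.mem_Icc.1 hs).1]
  rw [Finset.sum_congr rfl hj2]
  rw [Finset.sum_eq_single_of_mem P (Finset.mem_Icc.2 ⟨le_rfl, by omega⟩)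
    (by intro b _ hbne; rw [if_neg hbne, zero_smul])]
  rw [if_pos rfl, one_smul]

lemma lemB (Gg : ℤ → W) (l n₁ p : ℕ) (hn₁ : 1 ≤ n₁)
    (hG : ∀ j : ℤ, (n₁:ℤ) ≤ j → Gg j = 0) :
    ∑ A ∈ Finset.Icc (-(n₁:ℤ) - 1) (-1), ((-1 : ℂ) ^ (A - (p:ℤ)) * cbinom (A : ℂ) p)
        • (∑ i ∈ Finset.range (l + 1), cbinom ((l:ℕ):ℂ) i • Gg ((l:ℤ) - 1 - A - i))
      = -∑ j ∈ Finset.Icc (0:ℤ) ((l:ℤ) + n₁),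
          cbinom ((((l:ℤ) - 1 - p) : ℤ) : ℂ) j.toNat • Gg j := by
  rw [fibLemma Gg l (-(n₁:ℤ) - 1) (-1) (fun A => (-1 : ℂ) ^ (A - (p:ℤ)) * cbinom (A : ℂ) p)
    0 ((l:ℤ) + n₁) (by ring) (by ring)]
  rw [← Finset.sum_neg_distrib]
  apply Finset.sum_congr rfl
  intro j hj
  have hj' := Finset.mem_Icc.1 hj
  by_cases hjn : j ≤ (n₁:ℤ) - 1
  · rw [show max (-(n₁:ℤ) - 1) ((l:ℤ) - 1 - j - l) = -1 - j by
      rw [show (l:ℤ) - 1 - j - l = -1 - j by ring]; exact max_eq_right (by omega)]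
    rw [scalarB l p j (by omega),
      show ((((l:ℤ) - 1 - p) : ℤ) : ℂ) = (l:ℂ) - (p:ℂ) - 1 by push_cast; ring,
      neg_smul]
  · rw [hG j (by omega), smul_zero, smul_zero, neg_zero]

lemma lemA (Ee Gg : ℤ → W) (l n₁ : ℕ) (A₁ P : ℤ) (hP : P ≤ -1) (hA₁l : (l:ℤ) + 1 ≤ A₁)
    (hE : ∀ s : ℤ, A₁ ≤ s → Ee s = 0)
    (hG : ∀ j : ℤ, (n₁:ℤ) ≤ j → Gg j = 0)
    (hWA : ∀ A : ℤ, (∑ᶠ i : ℕ, cbinom ((A:ℂ) + (i:ℂ)) i • Ee (A + (i:ℤ)))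
        = ∑ i ∈ Finset.range (l + 1), cbinom ((l:ℕ):ℂ) i • Gg ((l:ℤ) - 1 - A - i)) :
    Ee P = ∑ j ∈ Finset.Icc (0:ℤ) (max ((l:ℤ) - 1 - P) ((n₁:ℤ) - 1)),
        cbinom ((((l:ℤ) - 1 - P) : ℤ) : ℂ) j.toNat • Gg j := by
  rw [← invLemma Ee Gg l A₁ P (by omega) hE hWA]
  rw [fibLemma Gg l P A₁ (fun A => (-1:ℂ) ^ (A - P) * cbinom (A:ℂ) ((A - P).toNat))
    (-1 - A₁) ((l:ℤ) - 1 - P) (by ring) rfl]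
  have hsub1 : Finset.Icc (0:ℤ) ((l:ℤ) - 1 - P) ⊆ Finset.Icc (-1 - A₁) ((l:ℤ) - 1 - P) := by
    intro x hx; simp only [Finset.mem_Icc] at *; omega
  rw [← Finset.sum_subset hsub1 (by
    intro x hx hx2
    have hx' : x < 0 := by simp only [Finset.mem_Icc] at hx hx2; omega
    have h0 : ∀ A ∈ Finset.Icc (max P ((l:ℤ) - 1 - x - l)) (min A₁ ((l:ℤ) - 1 - x)),
        (-1:ℂ) ^ (A - P) * cbinom (A:ℂ) ((A - P).toNat)
            * cbinom ((l:ℕ):ℂ) (((l:ℤ) - 1 - A - x).toNat) = 0 := by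
      intro A hA
      have hA' := Finset.mem_Icc.1 hA
      have h1 : (l:ℤ) - 1 - x - l ≤ A := le_trans (le_max_right _ _) hA'.1
      have hA0 : 0 ≤ A := by omega
      have hcast : (Int.cast A : ℂ) = ((A.toNat : ℕ) : ℂ) := by
        conv_lhs => rw [show A = ((A.toNat : ℕ) : ℤ) from by omega]
        rw [Int.cast_natCast]
      rw [hcast, cbinom_nat_eq_zero (show A.toNat < (A - P).toNat by omega), mul_zero, zero_mul]
    rw [Finset.sum_eq_zero h0, zero_smul])]
  have hsub2 : Finset.Icc (0:ℤ) ((l:ℤ) - 1 - P)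
      ⊆ Finset.Icc (0:ℤ) (max ((l:ℤ) - 1 - P) ((n₁:ℤ) - 1)) := by
    intro x hx
    simp only [Finset.mem_Icc] at *
    exact ⟨hx.1, le_trans hx.2 (le_max_left _ _)⟩
  rw [← Finset.sum_subset hsub2 (by
    intro x hx hx2
    have hx' : (l:ℤ) - 1 - P < x := by simp only [Finset.mem_Icc] at hx hx2; omega
    have hcast : (Int.cast ((l:ℤ) - 1 - P) : ℂ) = ((((l:ℤ) - 1 - P).toNat : ℕ) : ℂ) := by
      conv_lhs => rw [show (l:ℤ) - 1 - P = ((((l:ℤ) - 1 - P).toNat : ℕ) : ℤ) from by omega]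
      rw [Int.cast_natCast]
    rw [hcast, cbinom_nat_eq_zero (show ((l:ℤ) - 1 - P).toNat < x.toNat by omega), zero_smul])]
  apply Finset.sum_congr rfl
  intro j hj
  have hj' := Finset.mem_Icc.1 hj
  rw [show (l:ℤ) - 1 - j - l = -1 - j by ring,
    min_eq_right (show (l:ℤ) - 1 - j ≤ A₁ by omega),
    scalarA l P hP j (by omega),
    show ((((l:ℤ) - 1 - P) : ℤ) : ℂ) = (l:ℂ) - (P:ℂ) - 1 by push_cast; ring]

end helperLemmas


/-- A vertex operator algebra `(V, Y, 𝟙, ω)` over `ℂ`, described in terms of the modes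
`vₙ = Y v n` of the vertex operators `Y(v,x) = ∑ₙ vₙ x^{-n-1}`.  The Jacobi identity is
expressed in its equivalent component (Borcherds identity) form: it is the equality of the
coefficients of `x₀^{-n-1} x₁^{-a-1} x₂^{-b-1}` on the two sides of the formal-variable
Jacobi identity, with all binomials expanded by the binomial expansion convention. -/
structure VOA (V : Type) [AddCommGroup V] [Module ℂ V] where
  Y : V →ₗ[ℂ] ℤ → Module.End ℂ V
  vac : V
  conf : V
  cc : ℂ
  grade : ℤ → Submodule ℂ V
  internal : DirectSum.IsInternal grade
  findim : ∀ n : ℤ, FiniteDimensional ℂ (grade n)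
  bddBelow : ∃ N : ℤ, ∀ n < N, grade n = ⊥
  trunc : ∀ u v : V, ∃ N : ℤ, ∀ n ≥ N, Y u n v = 0
  vacuum : ∀ n : ℤ, Y vac n = if n = -1 then 1 else 0
  creation_zero : ∀ (v : V) (n : ℤ), 0 ≤ n → Y v n vac = 0
  creation_id : ∀ v : V, Y v (-1) vac = v
  virasoro : ∀ m n : ℤ,
    Y conf (m + 1) * Y conf (n + 1) - Y conf (n + 1) * Y conf (m + 1)
      = ((m - n : ℤ) : ℂ) • Y conf (m + n + 1)
        + (if m + n = 0 then ((m ^ 3 - m : ℤ) : ℂ) / 12 * cc else 0) •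
            (1 : Module.End ℂ V)
  L0_grade : ∀ n : ℤ, ∀ v ∈ grade n, Y conf 1 v = (n : ℂ) • v
  L_neg_one : ∀ (u : V) (n : ℤ), Y (Y conf 0 u) n = (-n : ℂ) • Y u (n - 1)
  jacobi : ∀ (u v w : V) (a n b : ℤ),
    (∑ᶠ i : ℕ, cbinom (a : ℂ) i • Y (Y u (n + i) v) (a + b - i) w)
      = (∑ᶠ i : ℕ, ((-1 : ℂ) ^ i * cbinom (n : ℂ) i) • Y u (a + n - i) (Y v (b + i) w))
        - (-1 : ℂ) ^ n •
            (∑ᶠ i : ℕ, ((-1 : ℂ) ^ i * cbinom (n : ℂ) i) • Y v (b + n - i) (Y u (a + i) w))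

variable {V W : Type} [AddCommGroup V] [Module ℂ V] [AddCommGroup W] [Module ℂ W]

/-- Truncation condition for a module-type vertex operator map. -/
def TruncW (YW : V →ₗ[ℂ] ℤ → Module.End ℂ W) : Prop :=
  ∀ (v : V) (w : W), ∃ N : ℤ, ∀ n ≥ N, YW v n w = 0

/-- The Jacobi identity for a module map `Y_W`, in component form. -/
def JacobiW (𝒜 : VOA V) (YW : V →ₗ[ℂ] ℤ → Module.End ℂ W) : Prop :=
  ∀ (u v : V) (w : W) (a n b : ℤ),
    (∑ᶠ i : ℕ, cbinom (a : ℂ) i • YW (𝒜.Y u (n + i) v) (a + b - i) w)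
      = (∑ᶠ i : ℕ, ((-1 : ℂ) ^ i * cbinom (n : ℂ) i) • YW u (a + n - i) (YW v (b + i) w))
        - (-1 : ℂ) ^ n •
            (∑ᶠ i : ℕ, ((-1 : ℂ) ^ i * cbinom (n : ℂ) i) • YW v (b + n - i) (YW u (a + i) w))

/-- Weak associativity with exponent `l`:
`(x₀+x₂)^l Y_W(u,x₀+x₂)Y_W(v,x₂)w = (x₀+x₂)^l Y_W(Y(u,x₀)v,x₂)w`, as the equality of the
coefficients of `x₀^A x₂^B`, all binomials expanded by the binomial expansion convention
(in nonnegative integral powers of `x₂`). -/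
def WeakAssocW (𝒜 : VOA V) (YW : V →ₗ[ℂ] ℤ → Module.End ℂ W) (l : ℕ)
    (u v : V) (w : W) : Prop :=
  ∀ A B : ℤ,
    (∑ᶠ i : ℕ, cbinom ((A : ℂ) + (i : ℂ)) i •
        YW u ((l : ℤ) - 1 - A - i) (YW v ((i : ℤ) - B - 1) w))
      = ∑ᶠ i : ℕ, cbinom (l : ℂ) i •
          YW (𝒜.Y u ((l : ℤ) - i - A - 1) v) ((i : ℤ) - B - 1) w

/-- Theorem 4.2.  Let `l = l(u,w)` be the smallest nonnegative integer
for which weak associativity holds for all `v`.  Then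
`lim_{x₀ → -x₂+x₁} ((x₀+x₂)^l Y_W(Y(u,x₀)v,x₂)w) = x₁^l Y_W(v,x₂)Y_W(u,x₁)w`,
stated as the equality of the coefficients of `x₁^P x₂^Q`; in the formal limit each power
of `x₀` is replaced by the corresponding binomially expanded power of `-x₂+x₁` (expanded
in nonnegative integral powers of `x₁`). -/
theorem statement1 (𝒜 : VOA V) (YW : V →ₗ[ℂ] ℤ → Module.End ℂ W)
    (hT : TruncW YW) (hJ : JacobiW 𝒜 YW) (u : V) (w : W) (l : ℕ)
    (hl : ∀ v : V, WeakAssocW 𝒜 YW l u v w)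
    (hmin : ∀ l' : ℕ, (∀ v : V, WeakAssocW 𝒜 YW l' u v w) → l ≤ l') :
    ∀ (v : V) (P Q : ℤ),
      (∑ᶠ A : ℤ, ((-1 : ℂ) ^ (A - P) * cbinomZ (A : ℂ) P) •
          (∑ᶠ i : ℕ, cbinom (l : ℂ) i •
            YW (𝒜.Y u ((l : ℤ) - i - A - 1) v) ((i : ℤ) - (Q - A + P) - 1) w))
        = YW v (-Q - 1) (YW u ((l : ℤ) - P - 1) w) := by
  intro v P Q
  classical
  obtain ⟨N1₀, hN1₀⟩ := 𝒜.trunc u v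
  obtain ⟨N2₀, hN2₀⟩ := hT v w
  set n₁ : ℕ := (max N1₀ 1).toNat with hn₁def
  have hmx1 : 1 ≤ max N1₀ 1 := le_max_right N1₀ 1
  have hmx2 : N1₀ ≤ max N1₀ 1 := le_max_left N1₀ 1
  have hn₁1 : 1 ≤ n₁ := by omega
  have hn₁N : N1₀ ≤ (n₁:ℤ) := by omega
  have hYuv : ∀ n : ℤ, (n₁:ℤ) ≤ n → 𝒜.Y u n v = 0 := fun n hn => hN1₀ n (by omega)
  set M2 : ℤ := max N2₀ (max ((l:ℤ) + 1 - P - Q) (1 - Q)) with hM2def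
  have hM2a : N2₀ ≤ M2 := le_max_left _ _
  have hM2b : (l:ℤ) + 1 - P - Q ≤ M2 := le_trans (le_max_left _ _) (le_max_right _ _)
  have hM2c : 1 - Q ≤ M2 := le_trans (le_max_right _ _) (le_max_right _ _)
  set A₁ : ℤ := P + Q + 1 + M2 with hA₁def
  have hA₁l : (l:ℤ) + 1 ≤ A₁ := by omega
  have hA₁P : P + 1 ≤ A₁ := by omega
  set Ee : ℤ → W := fun s => YW u ((l:ℤ) - 1 - s) (YW v (s - P - Q - 1) w) with hEedef
  set Gg : ℤ → W := fun j => YW (𝒜.Y u j v) ((l:ℤ) - P - Q - 2 - j) w with hGgdef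
  have hE : ∀ s : ℤ, A₁ ≤ s → Ee s = 0 := by
    intro s hs
    show YW u ((l:ℤ) - 1 - s) (YW v (s - P - Q - 1) w) = 0
    rw [hN2₀ (s - P - Q - 1) (by omega), map_zero]
  have hG : ∀ j : ℤ, (n₁:ℤ) ≤ j → Gg j = 0 := by
    intro j hjn
    show YW (𝒜.Y u j v) ((l:ℤ) - P - Q - 2 - j) w = 0
    rw [hYuv j hjn, map_zero]
    simp
  have hRconv : ∀ A : ℤ,
      (∑ᶠ i : ℕ, cbinom (l : ℂ) i • YW (𝒜.Y u ((l:ℤ) - i - A - 1) v) ((i:ℤ) - (Q - A + P) - 1) w)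
        = ∑ i ∈ Finset.range (l + 1), cbinom ((l:ℕ):ℂ) i • Gg ((l:ℤ) - 1 - A - i) := by
    intro A
    have h1 : ∀ i : ℕ,
        cbinom (l : ℂ) i • YW (𝒜.Y u ((l:ℤ) - i - A - 1) v) ((i:ℤ) - (Q - A + P) - 1) w
          = cbinom ((l:ℕ):ℂ) i • Gg ((l:ℤ) - 1 - A - i) := by
      intro i
      show _ = cbinom ((l:ℕ):ℂ) i •
        YW (𝒜.Y u ((l:ℤ) - 1 - A - i) v) ((l:ℤ) - P - Q - 2 - ((l:ℤ) - 1 - A - i)) w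
      rw [show (l:ℤ) - 1 - A - (i:ℤ) = (l:ℤ) - i - A - 1 by ring,
        show (l:ℤ) - P - Q - 2 - ((l:ℤ) - (i:ℤ) - A - 1) = (i:ℤ) - (Q - A + P) - 1 by ring]
    refine (finsum_congr h1).trans ?_
    apply finsum_eq_finset_sum_of_support_subset
    intro i hi
    rw [Finset.coe_range, Set.mem_Iio]
    by_contra hcon
    apply hi
    show cbinom ((l:ℕ):ℂ) i • Gg ((l:ℤ) - 1 - A - i) = 0
    rw [cbinom_nat_eq_zero (show l < i by omega), zero_smul]
  have hWA : ∀ A : ℤ, (∑ᶠ i : ℕ, cbinom ((A:ℂ) + (i:ℂ)) i • Ee (A + (i:ℤ)))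
      = ∑ i ∈ Finset.range (l + 1), cbinom ((l:ℕ):ℂ) i • Gg ((l:ℤ) - 1 - A - i) := by
    intro A
    have h := hl v A (Q - A + P)
    have h2 : (∑ᶠ i : ℕ, cbinom ((A:ℂ) + (i:ℂ)) i •
        YW u ((l:ℤ) - 1 - A - i) (YW v ((i:ℤ) - (Q - A + P) - 1) w))
        = ∑ᶠ i : ℕ, cbinom ((A:ℂ) + (i:ℂ)) i • Ee (A + (i:ℤ)) := by
      apply finsum_congr
      intro i
      show _ = cbinom ((A:ℂ) + (i:ℂ)) i •
        YW u ((l:ℤ) - 1 - (A + (i:ℤ))) (YW v ((A + (i:ℤ)) - P - Q - 1) w)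
      rw [show (l:ℤ) - 1 - (A + (i:ℤ)) = (l:ℤ) - 1 - A - i by ring,
        show A + (i:ℤ) - P - Q - 1 = (i:ℤ) - (Q - A + P) - 1 by ring]
    rw [← h2, h, hRconv A]
  have hcommIcc : ∀ M : ℤ, (n₁:ℤ) - 1 ≤ M →
      (∑ᶠ i : ℕ, cbinom (((l:ℤ) - 1 - P : ℤ) : ℂ) i • Gg (i:ℤ))
        = ∑ j ∈ Finset.Icc (0:ℤ) M, cbinom (((l:ℤ) - 1 - P : ℤ) : ℂ) j.toNat • Gg j := by
    intro M hM
    rw [finsum_eq_finset_sum_of_support_subset _ (s := Finset.range ((M + 1).toNat)) ?_]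
    · rw [sum_Icc_eq_range 0 M, show (M + 1 - 0).toNat = (M + 1).toNat by omega]
      apply Finset.sum_congr rfl
      intro k hk
      rw [show (0:ℤ) + (k:ℤ) = (k:ℤ) by ring, show ((k:ℤ)).toNat = k by omega]
    · intro i hi
      rw [Finset.coe_range, Set.mem_Iio]
      by_contra hcon
      apply hi
      show cbinom (((l:ℤ) - 1 - P : ℤ) : ℂ) i • Gg (i:ℤ) = 0
      rw [hG (i:ℤ) (by omega), smul_zero]
  have hcomm : (∑ᶠ i : ℕ, cbinom (((l:ℤ) - 1 - P : ℤ) : ℂ) i • Gg (i:ℤ))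
      = Ee P - YW v (-Q - 1) (YW u ((l:ℤ) - P - 1) w) := by
    have h := hJ u v w ((l:ℤ) - 1 - P) 0 (-Q - 1)
    have hL : (∑ᶠ i : ℕ, cbinom (((l:ℤ) - 1 - P : ℤ) : ℂ) i •
        YW (𝒜.Y u (0 + (i:ℤ)) v) ((l:ℤ) - 1 - P + (-Q - 1) - i) w)
        = ∑ᶠ i : ℕ, cbinom (((l:ℤ) - 1 - P : ℤ) : ℂ) i • Gg (i:ℤ) := by
      apply finsum_congr
      intro i
      show _ = cbinom (((l:ℤ) - 1 - P : ℤ) : ℂ) i •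
        YW (𝒜.Y u (i:ℤ) v) ((l:ℤ) - P - Q - 2 - (i:ℤ)) w
      rw [show (0:ℤ) + (i:ℤ) = (i:ℤ) by ring,
        show (l:ℤ) - 1 - P + (-Q - 1) - (i:ℤ) = (l:ℤ) - P - Q - 2 - (i:ℤ) by ring]
    have hR1 : (∑ᶠ i : ℕ, ((-1 : ℂ) ^ i * cbinom ((0:ℤ) : ℂ) i) •
        YW u ((l:ℤ) - 1 - P + 0 - i) (YW v (-Q - 1 + i) w)) = Ee P := by
      rw [finsum_eq_single _ 0 (by
        intro i hi
        rw [show ((0:ℤ) : ℂ) = ((0:ℕ) : ℂ) by norm_num,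
          cbinom_nat_eq_zero (Nat.pos_of_ne_zero hi), mul_zero, zero_smul])]
      show ((-1 : ℂ) ^ (0:ℕ) * cbinom ((0:ℤ) : ℂ) 0) •
        YW u ((l:ℤ) - 1 - P + 0 - (0:ℕ)) (YW v (-Q - 1 + (0:ℕ)) w) = Ee P
      rw [pow_zero, cbinom_zero, mul_one, one_smul]
      show _ = YW u ((l:ℤ) - 1 - P) (YW v (P - P - Q - 1) w)
      rw [show (l:ℤ) - 1 - P + 0 - ((0:ℕ):ℤ) = (l:ℤ) - 1 - P by push_cast; ring,
        show -Q - 1 + ((0:ℕ):ℤ) = P - P - Q - 1 by push_cast; ring]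
    have hR2 : (∑ᶠ i : ℕ, ((-1 : ℂ) ^ i * cbinom ((0:ℤ) : ℂ) i) •
        YW v (-Q - 1 + 0 - i) (YW u ((l:ℤ) - 1 - P + i) w))
        = YW v (-Q - 1) (YW u ((l:ℤ) - P - 1) w) := by
      rw [finsum_eq_single _ 0 (by
        intro i hi
        rw [show ((0:ℤ) : ℂ) = ((0:ℕ) : ℂ) by norm_num,
          cbinom_nat_eq_zero (Nat.pos_of_ne_zero hi), mul_zero, zero_smul])]
      show ((-1 : ℂ) ^ (0:ℕ) * cbinom ((0:ℤ) : ℂ) 0) •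
        YW v (-Q - 1 + 0 - (0:ℕ)) (YW u ((l:ℤ) - 1 - P + (0:ℕ)) w) = _
      rw [pow_zero, cbinom_zero, mul_one, one_smul]
      rw [show -Q - 1 + 0 - ((0:ℕ):ℤ) = -Q - 1 by push_cast; ring,
        show (l:ℤ) - 1 - P + ((0:ℕ):ℤ) = (l:ℤ) - P - 1 by push_cast; ring]
    rw [hL, hR1, hR2, zpow_zero, one_smul] at h
    exact h
  have hgoal : (∑ᶠ A : ℤ, ((-1 : ℂ) ^ (A - P) * cbinomZ (A : ℂ) P) •
      (∑ᶠ i : ℕ, cbinom (l : ℂ) i •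
        YW (𝒜.Y u ((l : ℤ) - i - A - 1) v) ((i : ℤ) - (Q - A + P) - 1) w))
      = ∑ᶠ A : ℤ, ((-1 : ℂ) ^ (A - P) * cbinomZ (A : ℂ) P) •
          (∑ i ∈ Finset.range (l + 1), cbinom ((l:ℕ):ℂ) i • Gg ((l:ℤ) - 1 - A - i)) := by
    apply finsum_congr
    intro A
    rw [hRconv A]
  rw [hgoal]
  by_cases hP : 0 ≤ P
  · -- main case
    set p : ℕ := P.toNat with hpdef
    have hpP : (p:ℤ) = P := by omega
    rw [finsum_eq_finset_sum_of_support_subset _ (s := Finset.Icc (-(n₁:ℤ) - 1) A₁) (by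
      intro A hi
      rw [Finset.coe_Icc, Set.mem_Icc]
      by_contra hcon
      rw [not_and_or] at hcon
      apply hi
      show ((-1 : ℂ) ^ (A - P) * cbinomZ (A : ℂ) P) •
        (∑ i ∈ Finset.range (l + 1), cbinom ((l:ℕ):ℂ) i • Gg ((l:ℤ) - 1 - A - i)) = 0
      rcases hcon with hc | hc
      · push_neg at hc
        rw [Finset.sum_eq_zero (fun i hi2 => by
          rw [hG ((l:ℤ) - 1 - A - i) (by have := Finset.mem_range.1 hi2; omega), smul_zero]),
          smul_zero]
      · push_neg at hc
        rw [← hWA A, finsum_eq_zero_of_forall_eq_zero (fun i => by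
          rw [hE (A + (i:ℤ)) (by omega), smul_zero]), smul_zero])]
    rw [show Finset.Icc (-(n₁:ℤ) - 1) A₁ = Finset.Icc (-(n₁:ℤ) - 1) (-1) ∪ Finset.Icc 0 A₁ by
        ext x; simp only [Finset.mem_union, Finset.mem_Icc]; omega,
      Finset.sum_union (by
        rw [Finset.disjoint_left]
        intro a ha hb
        simp only [Finset.mem_Icc] at ha hb
        omega)]
    have hSII : (∑ A ∈ Finset.Icc (-(n₁:ℤ) - 1) (-1), ((-1 : ℂ) ^ (A - P) * cbinomZ (A : ℂ) P) •
        (∑ i ∈ Finset.range (l + 1), cbinom ((l:ℕ):ℂ) i • Gg ((l:ℤ) - 1 - A - i)))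
        = -∑ j ∈ Finset.Icc (0:ℤ) ((l:ℤ) + n₁),
            cbinom (((l:ℤ) - 1 - P : ℤ) : ℂ) j.toNat • Gg j := by
      rw [show ((l:ℤ) - 1 - P) = ((l:ℤ) - 1 - (p:ℤ)) by omega, ← lemB Gg l n₁ p hn₁1 hG]
      apply Finset.sum_congr rfl
      intro A hA
      simp only [cbinomZ]
      rw [if_pos hP, ← hpdef, show A - (p:ℤ) = A - P by omega]
    have hSI : (∑ A ∈ Finset.Icc (0:ℤ) A₁, ((-1 : ℂ) ^ (A - P) * cbinomZ (A : ℂ) P) •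
        (∑ i ∈ Finset.range (l + 1), cbinom ((l:ℕ):ℂ) i • Gg ((l:ℤ) - 1 - A - i)))
        = Ee P := by
      rw [← invLemma Ee Gg l A₁ P hA₁P hE hWA]
      rw [← Finset.sum_subset (show Finset.Icc P A₁ ⊆ Finset.Icc 0 A₁ by
          intro x hx; simp only [Finset.mem_Icc] at *; omega) (by
        intro x hx hx2
        have hx' : x < P := by simp only [Finset.mem_Icc] at hx hx2; omega
        have hx0 : 0 ≤ x := by simp only [Finset.mem_Icc] at hx; exact hx.1
        simp only [cbinomZ]
        rw [if_pos hP, ← hpdef,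
          show (Int.cast x : ℂ) = ((x.toNat : ℕ) : ℂ) by
            conv_lhs => rw [show x = ((x.toNat : ℕ) : ℤ) from by omega]
            rw [Int.cast_natCast],
          cbinom_nat_eq_zero (show x.toNat < p by omega), mul_zero, zero_smul])]
      apply Finset.sum_congr rfl
      intro A hA
      have hA' := Finset.mem_Icc.1 hA
      simp only [cbinomZ]
      rw [if_pos hP, ← hpdef]
      have h9 : cbinom (Int.cast A : ℂ) p = cbinom (Int.cast A : ℂ) ((A - P).toNat) := by
        rw [show (Int.cast A : ℂ) = ((A.toNat : ℕ) : ℂ) by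
            conv_lhs => rw [show A = ((A.toNat : ℕ) : ℤ) from by omega]
            rw [Int.cast_natCast],
          cbinom_natCast, cbinom_natCast,
          show (A - P).toNat = A.toNat - p by omega,
          Nat.choose_symm (show p ≤ A.toNat by omega)]
      rw [h9]
    rw [hSII, hSI]
    rw [hcommIcc ((l:ℤ) + n₁) (by omega)] at hcomm
    rw [hcomm]
    abel
  · -- case P < 0
    push_neg at hP
    rw [finsum_eq_zero_of_forall_eq_zero (fun A => by
      simp only [cbinomZ]
      rw [if_neg (by omega), mul_zero, zero_smul])]
    have hEP := lemA Ee Gg l n₁ A₁ P (by omega) hA₁l hE hG hWA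
    rw [hcommIcc (max ((l:ℤ) - 1 - P) ((n₁:ℤ) - 1)) (le_max_right _ _), ← hEP] at hcomm
    have h0 : YW v (-Q - 1) (YW u ((l:ℤ) - P - 1) w) = 0 := sub_eq_self.mp hcomm.symm
    rw [h0]
end
end

section
/- Let M be a complex vector space with a linear map Y_M(·,x) satisfying the truncation condition and the twisted Jacobi identity. Then for every u ∈ V and every s ∈ ℤ: lim_{x_1^{1/p} → ω_p^s x^{1/p}} Y_M(ν^{s}u, x_1) = Y_M(u, x), where the formal limit replaces each integral power of the formal variable x_1^{1/p} by the corresponding power of ω_p^s x^{1/p}. -/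
noncomputable section

open scoped BigOperators

variable {V W : Type} [AddCommGroup V] [Module ℂ V] [AddCommGroup W] [Module ℂ W]

section Twisted

variable {V M : Type} [AddCommGroup V] [Module ℂ V] [AddCommGroup M] [Module ℂ M]

/-- Truncation condition for a twisted-module-type vertex operator map.  Here, for a fixed
period `p`, the map `Y_M` is encoded by its modes in `(1/p)ℤ`, rescaled by `p`:
`YM v N` is the mode `v^ν_{N/p}`, the coefficient of `x^{-N/p-1}` in `Y_M(v,x)`. -/
def TwTrunc (YM : V →ₗ[ℂ] ℤ → Module.End ℂ M) : Prop :=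
  ∀ (v : V) (w : M), ∃ N : ℤ, ∀ n ≥ N, YM v n w = 0

/-- The twisted Jacobi identity in component form: the equality of the coefficients of
`x₀^{-n-1} x₁^{-a/p-1} x₂^{-b/p-1}` on the two sides of the twisted Jacobi identity,
with all binomials expanded by the binomial expansion convention. -/
def TwJacobi (p : ℕ) (𝒜 : VOA V) (ν : V ≃ₗ[ℂ] V) (ωp : ℂ)
    (YM : V →ₗ[ℂ] ℤ → Module.End ℂ M) : Prop :=
  ∀ (u v : V) (w : M) (n a b : ℤ),
    (∑ᶠ i : ℕ, ((-1 : ℂ) ^ i * cbinom (n : ℂ) i) •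
        YM u (a + (p : ℤ) * (n - i)) (YM v (b + (p : ℤ) * i) w))
      - (-1 : ℂ) ^ n •
          (∑ᶠ i : ℕ, ((-1 : ℂ) ^ i * cbinom (n : ℂ) i) •
            YM v (b + (p : ℤ) * (n - i)) (YM u (a + (p : ℤ) * i) w))
      = (p : ℂ)⁻¹ • ∑ r ∈ Finset.range p, ωp ^ (-(r : ℤ) * a) •
          (∑ᶠ i : ℕ, cbinom ((a : ℂ) / (p : ℂ)) i •
            YM (𝒜.Y ((ν ^ r) u) (n + i) v) (a + b - (p : ℤ) * i) w)

/-- Weak commutativity for twisted vertex operators with exponent `k`: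
`(x₁-x₂)^k Y_M(u,x₁)Y_M(v,x₂) = (x₁-x₂)^k Y_M(v,x₂)Y_M(u,x₁)`, as the equality of the
coefficients of `x₁^{a/p} x₂^{b/p}` (endomorphism-valued). -/
def TwWC (p : ℕ) (YM : V →ₗ[ℂ] ℤ → Module.End ℂ M) (k : ℕ) (u v : V) : Prop :=
  ∀ a b : ℤ,
    (∑ᶠ i : ℕ, ((-1 : ℂ) ^ i * cbinom (k : ℂ) i) •
        (YM u ((p : ℤ) * ((k : ℤ) - i) - a - p) * YM v ((p : ℤ) * i - b - p)))
      = ∑ᶠ i : ℕ, ((-1 : ℂ) ^ i * cbinom (k : ℂ) i) •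
          (YM v ((p : ℤ) * i - b - p) * YM u ((p : ℤ) * ((k : ℤ) - i) - a - p))

/-- Modified weak associativity for twisted vertex operators with exponent `k`:
`lim_{x₁^{1/p} → ωₚ^s (x₂+x₀)^{1/p}} ((x₁-x₂)^k Y_M(u,x₁)Y_M(v,x₂))
   = x₀^k Y_M(Y(ν^{-s}u,x₀)v,x₂)` for all `s ∈ ℤ`, stated as the equality of the
coefficients of `x₀^n x₂^{C/p}` applied to an arbitrary vector `w`.  In the formal limit,
each integral power of `x₁^{1/p}` is replaced by the corresponding binomially expanded
power of `ωₚ^s (x₂+x₀)^{1/p}`. -/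
def TwMWA (p : ℕ) (𝒜 : VOA V) (ν : V ≃ₗ[ℂ] V) (ωp : ℂ)
    (YM : V →ₗ[ℂ] ℤ → Module.End ℂ M) (k : ℕ) (u v : V) : Prop :=
  ∀ (s n C : ℤ) (w : M),
    (∑ᶠ a : ℤ, (ωp ^ (s * a) * cbinomZ ((a : ℂ) / (p : ℂ)) n) •
        (∑ᶠ i : ℕ, ((-1 : ℂ) ^ i * cbinom (k : ℂ) i) •
          YM u ((p : ℤ) * ((k : ℤ) - i) - a - p)
            (YM v ((p : ℤ) * i - (C - a + (p : ℤ) * n) - p) w)))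
      = YM (𝒜.Y ((ν ^ (-s)) u) ((k : ℤ) - n - 1) v) (-C - p) w

end Twisted

section S6

variable {V M : Type} [AddCommGroup V] [Module ℂ V] [AddCommGroup M] [Module ℂ M]

/-- Theorem 4.13.  For every `u ∈ V` and `s ∈ ℤ`,
`lim_{x₁^{1/p} → ωₚ^s x^{1/p}} Y_M(ν^s u, x₁) = Y_M(u, x)`.  In terms of modes: the
coefficient of `x₁^{(-A-p)/p}` of `Y_M(ν^s u,x₁)` is multiplied by `ωₚ^{s(-A-p)}` under
the formal limit, and the result equals the corresponding mode of `Y_M(u,x)`. -/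
theorem statement6 (p : ℕ) (hp : 0 < p) (𝒜 : VOA V) (ν : V ≃ₗ[ℂ] V)
    (hν_vac : ν 𝒜.vac = 𝒜.vac) (hν_conf : ν 𝒜.conf = 𝒜.conf)
    (hν_Y : ∀ (u : V) (n : ℤ) (v : V), ν (𝒜.Y u n v) = 𝒜.Y (ν u) n (ν v))
    (hν_per : ν ^ p = 1) (ωp : ℂ) (hωp : IsPrimitiveRoot ωp p)
    (YM : V →ₗ[ℂ] ℤ → Module.End ℂ M)
    (hT : TwTrunc YM) (hJ : TwJacobi p 𝒜 ν ωp YM) :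
    ∀ (u : V) (s A : ℤ),
      ωp ^ (s * (-A - (p : ℤ))) • YM ((ν ^ s) u) A = YM u A := by

  intro u s A
  have hpC : (p : ℂ) ≠ 0 := Nat.cast_ne_zero.mpr hp.ne'
  have hω1 : ωp ^ p = 1 := hωp.pow_eq_one
  have hωne : ωp ≠ 0 := by
    intro h
    rw [h, zero_pow hp.ne'] at hω1
    exact one_ne_zero hω1.symm
  have hm1 : ((-1 : ℂ)) ^ (-1 : ℤ) = -1 := by norm_num
  -- ν^r fixes the vacuum
  have hvac : ∀ r : ℕ, (ν ^ r) 𝒜.vac = 𝒜.vac := by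
    intro r
    induction r with
    | zero => rfl
    | succ k ih =>
      have : (ν ^ (k + 1)) 𝒜.vac = (ν ^ k) (ν 𝒜.vac) := by rw [pow_succ]; rfl
      rw [this, hν_vac, ih]
  -- cancellation of a nonzero scalar
  have cancel : ∀ (x y : M), (p : ℂ) • x = (p : ℂ) • y → x = y := by
    intro x y h
    have := congrArg (fun z => (p : ℂ)⁻¹ • z) h
    simpa [smul_smul, inv_mul_cancel₀ hpC] using this
  -- evaluation of the iterate finsum, first instance
  have inner1 : ∀ (u : V) (w : M) (c : ℤ) (r : ℕ),
      (∑ᶠ i : ℕ, cbinom ((c : ℂ) / (p : ℂ)) i •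
        YM (𝒜.Y ((ν ^ r) u) (-1 + (i : ℤ)) 𝒜.vac) (c + 0 - (p : ℤ) * (i : ℤ)) w)
        = YM ((ν ^ r) u) c w := by
    intro u w c r
    rw [finsum_eq_single _ 0 ?_]
    · have h0 : (-1 + ((0 : ℕ) : ℤ)) = -1 := by norm_num
      rw [h0, 𝒜.creation_id]
      norm_num [cbinom]
    · intro i hi
      have hi1 : (0 : ℤ) ≤ -1 + (i : ℤ) := by
        have : 1 ≤ i := Nat.one_le_iff_ne_zero.mpr hi
        omega
      rw [𝒜.creation_zero _ _ hi1]
      simp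
  -- evaluation of the iterate finsum, second instance (vacuum in first slot)
  have inner2 : ∀ (u : V) (w : M) (c : ℤ) (r : ℕ),
      (∑ᶠ i : ℕ, cbinom (((0 : ℤ) : ℂ) / (p : ℂ)) i •
        YM (𝒜.Y ((ν ^ r) 𝒜.vac) (-1 + (i : ℤ)) u) (0 + c - (p : ℤ) * (i : ℤ)) w)
        = YM u c w := by
    intro u w c r
    rw [hvac r, finsum_eq_single _ 0 ?_]
    · have h0 : (-1 + ((0 : ℕ) : ℤ)) = -1 := by norm_num
      rw [h0, 𝒜.vacuum, if_pos rfl]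
      norm_num [cbinom]
    · intro i hi
      have hne : (-1 + (i : ℤ)) ≠ -1 := by
        have : 1 ≤ i := Nat.one_le_iff_ne_zero.mpr hi
        omega
      rw [𝒜.vacuum, if_neg hne]
      simp
  -- the key summation identity
  have star : ∀ (u : V) (c : ℤ) (w : M),
      (∑ r ∈ Finset.range p, ωp ^ (-(r : ℤ) * c) • YM ((ν ^ r) u) c w)
        = (p : ℂ) • YM u c w := by
    intro u c w
    have h1 := hJ u 𝒜.vac w (-1) c 0
    have h2 := hJ 𝒜.vac u w (-1) 0 c
    rw [hm1, neg_smul, one_smul, sub_neg_eq_add] at h1 h2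
    simp only [inner1] at h1
    simp only [inner2] at h2
    have h12 : (p : ℂ)⁻¹ • (∑ r ∈ Finset.range p, ωp ^ (-(r : ℤ) * c) • YM ((ν ^ r) u) c w)
        = (p : ℂ)⁻¹ • ∑ r ∈ Finset.range p, ωp ^ (-(r : ℤ) * 0) • YM u c w := by
      rw [← h1, ← h2, add_comm]
    have h2' : (p : ℂ)⁻¹ • ∑ r ∈ Finset.range p, ωp ^ (-(r : ℤ) * 0) • YM u c w
        = (p : ℂ)⁻¹ • ((p : ℂ) • YM u c w) := by
      congr 1
      simp only [mul_zero, zpow_zero, one_smul, Finset.sum_const, Finset.card_range]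
      rw [Nat.cast_smul_eq_nsmul ℂ p]
    rw [h2'] at h12
    have := congrArg (fun z => (p : ℂ) • z) h12
    simpa [smul_smul, mul_inv_cancel₀ hpC, inv_mul_cancel₀ hpC] using this
  -- key step: shifting by one power of ν
  have key1 : ∀ (u : V) (c : ℤ) (w : M), YM (ν u) c w = ωp ^ c • YM u c w := by
    intro u c w
    have hs1 := star (ν u) c w
    have hs2 := star u c w
    set F : ℕ → M := fun r => ωp ^ ((1 - (r : ℤ)) * c) • YM ((ν ^ r) u) c w with hF
    have claim1 : ∀ r : ℕ, ωp ^ (-(r : ℤ) * c) • YM ((ν ^ r) (ν u)) c w = F (r + 1) := by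
      intro r
      have hν : (ν ^ (r + 1)) u = (ν ^ r) (ν u) := by rw [pow_succ]; rfl
      rw [hF]
      simp only
      rw [hν]
      congr 2
      push_cast
      ring
    have hper : ∀ m k : ℤ, ωp ^ (m + (p : ℤ) * k) = ωp ^ m := by
      intro m k
      rw [zpow_add₀ hωne]
      have h1 : ωp ^ ((p : ℤ) * k) = 1 := by
        rw [zpow_mul, zpow_natCast, hω1, one_zpow]
      rw [h1, mul_one]
    have hFp0 : F p = F 0 := by
      rw [hF]
      simp only
      have hexp : (1 - ((p : ℕ) : ℤ)) * c = (1 - ((0 : ℕ) : ℤ)) * c + (p : ℤ) * (-c) := by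
        push_cast; ring
      rw [hexp, hper, hν_per, pow_zero]
    have claim2 : (∑ r ∈ Finset.range p, F (r + 1)) = ∑ r ∈ Finset.range p, F r := by
      have e1 : (∑ r ∈ Finset.range (p + 1), F r)
          = (∑ r ∈ Finset.range p, F (r + 1)) + F 0 := Finset.sum_range_succ' F p
      have e2 : (∑ r ∈ Finset.range (p + 1), F r)
          = (∑ r ∈ Finset.range p, F r) + F p := Finset.sum_range_succ F p
      rw [e2, hFp0] at e1
      exact (add_right_cancel e1.symm)
    have claim3 : ∀ r : ℕ, F r = ωp ^ c • (ωp ^ (-(r : ℤ) * c) • YM ((ν ^ r) u) c w) := by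
      intro r
      rw [hF]
      simp only
      rw [smul_smul, ← zpow_add₀ hωne]
      congr 2
      ring
    have hchain : (p : ℂ) • YM (ν u) c w = ωp ^ c • ((p : ℂ) • YM u c w) := by
      rw [← hs1, ← hs2]
      calc (∑ r ∈ Finset.range p, ωp ^ (-(r : ℤ) * c) • YM ((ν ^ r) (ν u)) c w)
          = ∑ r ∈ Finset.range p, F (r + 1) := by
            exact Finset.sum_congr rfl fun r _ => claim1 r
        _ = ∑ r ∈ Finset.range p, F r := claim2
        _ = ∑ r ∈ Finset.range p, ωp ^ c • (ωp ^ (-(r : ℤ) * c) • YM ((ν ^ r) u) c w) :=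
            Finset.sum_congr rfl fun r _ => claim3 r
        _ = ωp ^ c • ∑ r ∈ Finset.range p, ωp ^ (-(r : ℤ) * c) • YM ((ν ^ r) u) c w :=
            (Finset.smul_sum).symm
    apply cancel
    rw [hchain, smul_comm]
  -- inverse version
  have keyInv : ∀ (u : V) (c : ℤ) (w : M), YM (ν⁻¹ u) c w = ωp ^ (-c) • YM u c w := by
    intro u c w
    have h := key1 (ν⁻¹ u) c w
    have hid : ν (ν⁻¹ u) = u := by
      have hmi : ν * ν⁻¹ = 1 := mul_inv_cancel ν
      calc ν (ν⁻¹ u) = (ν * ν⁻¹) u := rfl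
        _ = u := by rw [hmi]; rfl
    rw [hid] at h
    rw [h, smul_smul, ← zpow_add₀ hωne]
    norm_num
  -- all integer powers
  have keyZ : ∀ (t : ℤ) (u : V) (w : M), YM ((ν ^ t) u) A w = ωp ^ (t * A) • YM u A w := by
    intro t
    induction t using Int.induction_on with
    | zero => intro u w; simp
    | succ k ih =>
      intro u w
      have hν : (ν ^ ((k : ℤ) + 1)) u = (ν ^ (k : ℤ)) (ν u) := by rw [zpow_add_one]; rfl
      rw [hν, ih (ν u) w, key1 u A w, smul_smul, ← zpow_add₀ hωne]
      congr 2
      ring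
    | pred k ih =>
      intro u w
      have hν : (ν ^ (-(k : ℤ) - 1)) u = (ν ^ (-(k : ℤ))) (ν⁻¹ u) := by
        rw [zpow_sub_one]; rfl
      rw [hν, ih (ν⁻¹ u) w, keyInv u A w, smul_smul, ← zpow_add₀ hωne]
      congr 2
      ring
  -- conclude
  ext w
  have h := keyZ s u w
  show ωp ^ (s * (-A - (p : ℤ))) • YM ((ν ^ s) u) A w = YM u A w
  rw [h, smul_smul, ← zpow_add₀ hωne]
  have hexp : s * (-A - (p : ℤ)) + s * A = (p : ℤ) * (-s) := by ring
  rw [hexp, zpow_mul, zpow_natCast, hω1, one_zpow, one_smul]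


end S6
end
end
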